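/- Let f and f̃ be the conical functions associated with the same slopes α₁ > α₂ > … > α_{N+1} and with values (a₁,…,a_N) and (ã₁,…,ã_N) respectively. If If(θ) = If̃(θ) for all θ in some neighborhood of 0, then a_i = ã_i for every i ∈ {1,…,N}. In particular, a conical function whose X-ray data If vanishes identically near θ = 0 is identically zero. -/

import Mathlib

open Real MeasureTheory Finset

namespace Stmt4Aux

noncomputable def tt {N : ℕ} (α : Fin (N+1) → ℝ) (θ : ℝ) (j : Fin (N+1)) : ℝ :=
  (Real.sin θ + α j * Real.cos θ) / (Real.cos θ - α j * Real.sin θ)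

variable {N : ℕ} {α : Fin (N+1) → ℝ} {θ s : ℝ}

lemma lt_tt_iff {j : Fin (N+1)} (hc : 0 < cos θ - α j * sin θ) :
    (-sin θ + s * cos θ < α j * (cos θ + s * sin θ)) ↔ s < tt α θ j := by
  rw [tt, lt_div_iff₀ hc]
  constructor <;> intro h <;> nlinarith

lemma tt_lt_iff {j : Fin (N+1)} (hc : 0 < cos θ - α j * sin θ) :
    (α j * (cos θ + s * sin θ) < -sin θ + s * cos θ) ↔ tt α θ j < s := by
  rw [tt, div_lt_iff₀ hc]
  constructor <;> intro h <;> nlinarith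

lemma y_pos {j k : Fin (N+1)} (hcj : 0 < cos θ - α j * sin θ)
    (hck : 0 < cos θ - α k * sin θ) (h1 : tt α θ k < s) (h2 : s < tt α θ j) :
    0 < cos θ + s * sin θ := by
  have hj : s * (cos θ - α j * sin θ) < sin θ + α j * cos θ := (lt_div_iff₀ hcj).mp h2
  have hk : sin θ + α k * cos θ < s * (cos θ - α k * sin θ) := (div_lt_iff₀ hck).mp h1
  have hpy := sin_sq_add_cos_sq θ
  rcases le_or_gt (sin θ) 0 with hs | hs
  · nlinarith [mul_nonneg (sub_nonneg.2 hj.le) (neg_nonneg.2 hs)]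
  · nlinarith [mul_nonneg (sub_nonneg.2 hk.le) hs.le]

lemma tt_sub {j k : Fin (N+1)} (hcj : 0 < cos θ - α j * sin θ)
    (hck : 0 < cos θ - α k * sin θ) :
    tt α θ j - tt α θ k = (α j - α k) / ((cos θ - α j * sin θ) * (cos θ - α k * sin θ)) := by
  rw [tt, tt, div_sub_div _ _ hcj.ne' hck.ne']
  congr 1
  linear_combination (α j - α k) * sin_sq_add_cos_sq θ

lemma tt_anti (hc : ∀ j, 0 < cos θ - α j * sin θ) {j k : Fin (N+1)} (h : α k < α j) :
    tt α θ k < tt α θ j := by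
  have := tt_sub (α := α) (θ := θ) (hc j) (hc k)
  have hpos : 0 < (α j - α k) / ((cos θ - α j * sin θ) * (cos θ - α k * sin θ)) :=
    div_pos (by linarith) (mul_pos (hc j) (hc k))
  linarith

lemma tt_antitone (hα : StrictAnti α) (hc : ∀ j, 0 < cos θ - α j * sin θ)
    {j k : Fin (N+1)} (h : j ≤ k) : tt α θ k ≤ tt α θ j := by
  rcases eq_or_lt_of_le h with rfl | h
  · exact le_rfl
  · exact (tt_anti hc (hα h)).le

lemma integral_eq (hα : StrictAnti α) (a : Fin N → ℝ) (f : ℝ × ℝ → ℝ)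
    (hf1 : ∀ i : Fin N, ∀ x y : ℝ,
      0 < y → α i.succ * y < x → x < α i.castSucc * y → f (x, y) = a i)
    (hf0 : ∀ x y : ℝ,
      (¬ ∃ i : Fin N, 0 < y ∧ α i.succ * y < x ∧ x < α i.castSucc * y) → f (x, y) = 0)
    (hc : ∀ j, 0 < cos θ - α j * sin θ) :
    (∫ s : ℝ, f (-sin θ + s * cos θ, cos θ + s * sin θ)) =
      ∑ i : Fin N, a i * (tt α θ i.castSucc - tt α θ i.succ) := by
  have hpt : ∀ s : ℝ, f (-sin θ + s * cos θ, cos θ + s * sin θ) =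
      ∑ i : Fin N, Set.indicator (Set.Ioo (tt α θ i.succ) (tt α θ i.castSucc))
        (fun _ => a i) s := by
    intro s
    by_cases h : ∃ i : Fin N, s ∈ Set.Ioo (tt α θ i.succ) (tt α θ i.castSucc)
    · obtain ⟨i, hi⟩ := h
      rw [Finset.sum_eq_single i]
      · rw [Set.indicator_of_mem hi]
        exact hf1 i _ _ (y_pos (hc i.castSucc) (hc i.succ) hi.1 hi.2)
          ((tt_lt_iff (hc i.succ)).mpr hi.1) ((lt_tt_iff (hc i.castSucc)).mpr hi.2)
      · intro j _ hji
        apply Set.indicator_of_notMem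
        intro hj
        rcases lt_or_gt_of_ne hji with hlt | hlt
        · -- j < i : tt i.castSucc ≤ tt j.succ
          have hle : (j.succ : Fin (N+1)) ≤ i.castSucc := by
            rw [Fin.le_def, Fin.val_succ, Fin.coe_castSucc]; rw [Fin.lt_def] at hlt; omega
          have := tt_antitone hα hc hle
          exact absurd (hi.2.trans_le this) (not_lt.2 hj.1.le)
        · have hle : (i.succ : Fin (N+1)) ≤ j.castSucc := by
            rw [Fin.le_def, Fin.val_succ, Fin.coe_castSucc]
            have : (i : ℕ) < j := hlt; omega
          have := tt_antitone hα hc hle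
          exact absurd (hj.2.trans_le this) (not_lt.2 hi.1.le)
      · intro hni; exact absurd (Finset.mem_univ i) hni
    · rw [hf0]
      · exact (Finset.sum_eq_zero fun i _ =>
          Set.indicator_of_notMem (fun hs => h ⟨i, hs⟩) _).symm
      · rintro ⟨i, hy, h1, h2⟩
        exact h ⟨i, (tt_lt_iff (hc i.succ)).mp h1, (lt_tt_iff (hc i.castSucc)).mp h2⟩
  have hfun : (fun s : ℝ => f (-sin θ + s * cos θ, cos θ + s * sin θ)) =
      fun s => ∑ i : Fin N, Set.indicator (Set.Ioo (tt α θ i.succ) (tt α θ i.castSucc))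
        (fun _ => a i) s := funext hpt
  rw [show (∫ s : ℝ, f (-sin θ + s * cos θ, cos θ + s * sin θ)) =
      ∫ s : ℝ, ∑ i : Fin N, Set.indicator (Set.Ioo (tt α θ i.succ) (tt α θ i.castSucc))
        (fun _ => a i) s from by rw [hfun]]
  rw [MeasureTheory.integral_finset_sum]
  · refine Finset.sum_congr rfl fun i _ => ?_
    rw [MeasureTheory.integral_indicator_const _ measurableSet_Ioo]
    rw [Real.volume_real_Ioo, smul_eq_mul]
    rw [max_eq_left (sub_nonneg.2 (tt_antitone hα hc (Fin.castSucc_le_succ i)))]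
    ring
  · intro i _
    rw [MeasureTheory.integrable_indicator_iff measurableSet_Ioo]
    exact integrableOn_const measure_Ioo_lt_top.ne

end Stmt4Aux

open Stmt4Aux Polynomial Finset in
/-- Two conical functions with the same slopes α₁ > … > α_{N+1} and values
(a_i), (ã_i) whose X-ray data agree for all θ in a neighborhood of 0 have equal values;
in particular a conical function with vanishing X-ray data near θ = 0 is identically zero. -/
theorem stmt_4 (N : ℕ) (hN : 1 ≤ N) (α : Fin (N + 1) → ℝ) (hα : StrictAnti α)
    (a atil : Fin N → ℝ) (f ftil : ℝ × ℝ → ℝ)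
    (hf1 : ∀ i : Fin N, ∀ x y : ℝ,
      0 < y → α i.succ * y < x → x < α i.castSucc * y → f (x, y) = a i)
    (hf0 : ∀ x y : ℝ,
      (¬ ∃ i : Fin N, 0 < y ∧ α i.succ * y < x ∧ x < α i.castSucc * y) → f (x, y) = 0)
    (hftil1 : ∀ i : Fin N, ∀ x y : ℝ,
      0 < y → α i.succ * y < x → x < α i.castSucc * y → ftil (x, y) = atil i)
    (hftil0 : ∀ x y : ℝ,
      (¬ ∃ i : Fin N, 0 < y ∧ α i.succ * y < x ∧ x < α i.castSucc * y) → ftil (x, y) = 0)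
    (hI : ∀ᶠ θ in nhds (0 : ℝ),
      (∫ s : ℝ, f (-sin θ + s * cos θ, cos θ + s * sin θ)) =
      (∫ s : ℝ, ftil (-sin θ + s * cos θ, cos θ + s * sin θ))) :
    ∀ i : Fin N, a i = atil i := by
  set d : Fin N → ℝ := fun i => a i - atil i with hd
  -- A bound on the slopes
  obtain ⟨A, hA1, hA⟩ : ∃ A : ℝ, 1 ≤ A ∧ ∀ j, |α j| < A := by
    refine ⟨(Finset.univ.sup' Finset.univ_nonempty fun j => |α j|) + 1, ?_, ?_⟩
    · have := Finset.le_sup' (fun j => |α j|) (Finset.mem_univ (0 : Fin (N+1)))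
      have := abs_nonneg (α 0)
      linarith
    · intro j
      have := Finset.le_sup' (fun j => |α j|) (Finset.mem_univ j)
      linarith
  -- eventually all denominators positive
  have hcos : ∀ᶠ θ in nhds (0 : ℝ), (1:ℝ)/2 < cos θ := by
    have : Filter.Tendsto cos (nhds 0) (nhds 1) := by
      have h := Real.continuous_cos.tendsto 0
      rwa [Real.cos_zero] at h
    exact this.eventually (eventually_gt_nhds (by norm_num))
  have hsin : ∀ᶠ θ in nhds (0 : ℝ), |sin θ| < 1/(2*A) := by
    have : Filter.Tendsto (fun θ => |sin θ|) (nhds 0) (nhds 0) := by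
      have h := (Real.continuous_sin.abs).tendsto 0
      simpa using h
    exact this.eventually (eventually_lt_nhds (by positivity))
  have hcev : ∀ᶠ θ in nhds (0 : ℝ), ∀ j, 0 < cos θ - α j * sin θ := by
    filter_upwards [hcos, hsin] with θ h1 h2 j
    have h3 : α j * sin θ ≤ |α j| * |sin θ| := by
      calc α j * sin θ ≤ |α j * sin θ| := le_abs_self _
        _ = |α j| * |sin θ| := abs_mul _ _
    have h4 : |α j| * |sin θ| < A * (1/(2*A)) := by
      apply mul_lt_mul' (hA j).le h2 (abs_nonneg _) (by linarith)
    have h5 : A * (1/(2*A)) = 1/2 := by field_simp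
    linarith
  -- the key eventual identity
  have hkey : ∀ᶠ θ in nhds (0 : ℝ),
      (∀ j, 0 < cos θ - α j * sin θ) ∧
      ∑ i : Fin N, d i * (tt α θ i.castSucc - tt α θ i.succ) = 0 := by
    filter_upwards [hI, hcev] with θ h1 h2
    refine ⟨h2, ?_⟩
    have e1 := integral_eq hα a f hf1 hf0 h2
    have e2 := integral_eq hα atil ftil hftil1 hftil0 h2
    rw [e1, e2, ← sub_eq_zero, ← Finset.sum_sub_distrib] at h1
    rw [← h1]
    apply Finset.sum_congr rfl
    intro i _
    simp [hd]; ring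
  obtain ⟨ε, hε, hball⟩ := Metric.eventually_nhds_iff.mp hkey
  set ε' : ℝ := min ε 1 with hε'
  have hε'pos : 0 < ε' := lt_min hε one_pos
  -- the polynomial
  set q : Polynomial ℝ := ∑ i : Fin N, Polynomial.C (d i * (α i.castSucc - α i.succ)) *
      ∏ j ∈ (Finset.univ.erase i.castSucc).erase i.succ,
        (Polynomial.X - Polynomial.C (α j)) with hq
  have hqeval : ∀ x : ℝ, q.eval x = ∑ i : Fin N, (d i * (α i.castSucc - α i.succ)) *
      ∏ j ∈ (Finset.univ.erase i.castSucc).erase i.succ, (x - α j) := by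
    intro x
    rw [hq, Polynomial.eval_finset_sum]
    refine Finset.sum_congr rfl fun i _ => ?_
    rw [Polynomial.eval_mul, Polynomial.eval_C, Polynomial.eval_prod]
    congr 1
    exact Finset.prod_congr rfl fun j _ => by
      rw [Polynomial.eval_sub, Polynomial.eval_X, Polynomial.eval_C]
  have hπ := Real.pi_gt_three
  -- every cot θ, θ ∈ (0, ε'), is a root of q
  have hroot : ∀ θ ∈ Set.Ioo (0:ℝ) ε', q.eval (cos θ / sin θ) = 0 := by
    intro θ hθ
    have hθε : dist θ 0 < ε := by
      rw [Real.dist_eq, sub_zero, abs_of_pos hθ.1]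
      exact hθ.2.trans_le (min_le_left _ _)
    obtain ⟨hc, hsum⟩ := hball hθε
    have hθ1 : θ < 1 := hθ.2.trans_le (min_le_right _ _)
    have hspos : 0 < sin θ := Real.sin_pos_of_pos_of_lt_pi hθ.1 (by linarith)
    set u := cos θ / sin θ with hu
    have hcu : ∀ j, cos θ - α j * sin θ = sin θ * (u - α j) := by
      intro j; rw [hu]; field_simp
    have hfac : ∀ i : Fin N,
        d i * (tt α θ i.castSucc - tt α θ i.succ) * ∏ j, (cos θ - α j * sin θ)
        = sin θ ^ (N-1) * ((d i * (α i.castSucc - α i.succ)) *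
            ∏ j ∈ (Finset.univ.erase i.castSucc).erase i.succ, (u - α j)) := by
      intro i
      have hmem1 : i.succ ∈ Finset.univ.erase i.castSucc :=
        Finset.mem_erase.2 ⟨(Fin.castSucc_lt_succ (i := i)).ne', Finset.mem_univ _⟩
      have hprod : ∏ j, (cos θ - α j * sin θ) = (cos θ - α i.castSucc * sin θ) *
          ((cos θ - α i.succ * sin θ) *
            ∏ j ∈ (Finset.univ.erase i.castSucc).erase i.succ, (cos θ - α j * sin θ)) := by
        rw [← Finset.mul_prod_erase _ _ (Finset.mem_univ i.castSucc),
          ← Finset.mul_prod_erase _ _ hmem1]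
      have hcard : ((Finset.univ.erase i.castSucc).erase i.succ).card = N - 1 := by
        rw [Finset.card_erase_of_mem hmem1,
          Finset.card_erase_of_mem (Finset.mem_univ _), Finset.card_univ, Fintype.card_fin]
        omega
      have hSprod : ∏ j ∈ (Finset.univ.erase i.castSucc).erase i.succ,
          (cos θ - α j * sin θ)
          = sin θ ^ (N-1) * ∏ j ∈ (Finset.univ.erase i.castSucc).erase i.succ, (u - α j) := by
        rw [Finset.prod_congr rfl fun j _ => hcu j, Finset.prod_mul_distrib,
          Finset.prod_const, hcard]
      have hc1 : (cos θ - α i.castSucc * sin θ) ≠ 0 := (hc _).ne'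
      have hc2 : (cos θ - α i.succ * sin θ) ≠ 0 := (hc _).ne'
      rw [tt_sub (hc _) (hc _), hprod, hSprod]
      field_simp
    have h2 : (∑ i : Fin N, d i * (tt α θ i.castSucc - tt α θ i.succ)) *
        ∏ j, (cos θ - α j * sin θ) = sin θ ^ (N-1) * q.eval u := by
      rw [Finset.sum_mul, hqeval, Finset.mul_sum]
      exact Finset.sum_congr rfl fun i _ => hfac i
    rw [hsum, zero_mul] at h2
    exact ((mul_eq_zero.1 h2.symm).resolve_left (pow_ne_zero _ hspos.ne'))
  -- cot is injective on (0, ε')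
  have hanti : StrictAntiOn (fun θ => cos θ / sin θ) (Set.Ioo (0:ℝ) ε') := by
    intro x hx y hy hxy
    have hx0 := hx.1
    have hy0 := hy.1
    have hx1 : x < 1 := hx.2.trans_le (min_le_right _ _)
    have hy1 : y < 1 := hy.2.trans_le (min_le_right _ _)
    have hsx : 0 < sin x := Real.sin_pos_of_pos_of_lt_pi hx.1 (by linarith)
    have hsy : 0 < sin y := Real.sin_pos_of_pos_of_lt_pi hy.1 (by linarith)
    have hss : sin x < sin y := Real.strictMonoOn_sin
      ⟨by linarith, by linarith⟩ ⟨by linarith, by linarith⟩ hxy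
    have hcc : cos y < cos x := Real.strictAntiOn_cos
      ⟨by linarith, by linarith⟩ ⟨by linarith, by linarith⟩ hxy
    have hcy : 0 < cos y := Real.cos_pos_of_mem_Ioo ⟨by linarith, by linarith⟩
    simp only
    rw [div_lt_div_iff₀ hsy hsx]
    nlinarith
  have hq0 : q = 0 := by
    apply Polynomial.eq_zero_of_infinite_isRoot
    refine Set.Infinite.mono ?_ (((Set.Ioo_infinite (a := (0:ℝ)) (b := ε') hε'pos)).image hanti.injOn)
    rintro x ⟨θ, hθ, rfl⟩
    exact hroot θ hθ
  -- extract the coefficients one by one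
  have hd0 : ∀ n : ℕ, ∀ i : Fin N, (i : ℕ) = n → d i = 0 := by
    intro n
    induction n using Nat.strong_induction_on with
    | _ n IH =>
      intro i hi
      have hev : q.eval (α i.castSucc) = 0 := by rw [hq0]; simp
      rw [hqeval, Finset.sum_eq_single i] at hev
      · have hne1 : α i.castSucc - α i.succ ≠ 0 :=
          sub_ne_zero.2 (hα (Fin.castSucc_lt_succ (i := i))).ne'
        have hne2 : ∏ j ∈ (Finset.univ.erase i.castSucc).erase i.succ,
            (α i.castSucc - α j) ≠ 0 := by
          rw [Finset.prod_ne_zero_iff]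
          intro j hj
          have hj2 : j ≠ i.castSucc := (Finset.mem_erase.1 (Finset.mem_erase.1 hj).2).1
          exact sub_ne_zero.2 fun h => hj2 (hα.injective h).symm
        rcases mul_eq_zero.1 hev with h | h
        · rcases mul_eq_zero.1 h with h' | h'
          · exact h'
          · exact absurd h' hne1
        · exact absurd h hne2
      · intro i' _ hne
        by_cases hcase : i.castSucc = i'.succ
        · have hval : (i' : ℕ) + 1 = (i : ℕ) := by
            have := congrArg Fin.val hcase
            simpa using this.symm
          have hlt : (i' : ℕ) < n := by omega
          rw [IH _ hlt i' rfl, zero_mul, zero_mul]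
        · have hmem : i.castSucc ∈ (Finset.univ.erase i'.castSucc).erase i'.succ := by
            refine Finset.mem_erase.2 ⟨hcase, Finset.mem_erase.2 ⟨?_, Finset.mem_univ _⟩⟩
            intro h
            exact hne (Fin.castSucc_injective _ h).symm
          have hz : ∏ j ∈ (Finset.univ.erase i'.castSucc).erase i'.succ,
              (α i.castSucc - α j) = 0 := Finset.prod_eq_zero hmem (sub_self _)
          rw [hz, mul_zero]
      · intro h; exact absurd (Finset.mem_univ i) h
  intro i
  have := hd0 (i : ℕ) i rfl
  rw [hd] at this
  simpa [sub_eq_zero] using this
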